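/- Let p be a prime, let Λ = ℤ_p⟦T⟧ be the formal power series ring in one variable over ℤ_p, let n ≥ 0 and s ≥ 0 be integers, and put ν = Σ_{k=0}^{p−1} (1+T)^{k·pⁿ} ∈ Λ. Let Y be a finitely generated Λ-module and let f : Y → ℤ_p^s be a surjective Λ-module homomorphism, where Λ acts on ℤ_p^s through the augmentation T ↦ 0 (so that ν acts on ℤ_p^s as multiplication by p). If the quotient Y/νY is finite of cardinality p^s, then the kernel of f is zero; in particular, Y is isomorphic to ℤ_p^s as a Λ-module. -/

import Mathlib

open PowerSeries Pointwise

/-- Let `p` be prime, `Λ = ℤ_p⟦T⟧`, `n, s ≥ 0`, and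
`ν = Σ_{k=0}^{p−1} (1+T)^{k·pⁿ} ∈ Λ`. Let `Y` be a finitely generated `Λ`-module and
`f : Y → ℤ_p^s` a surjective `Λ`-module homomorphism, where `Λ` acts on `ℤ_p^s` through the
augmentation `T ↦ 0` (formalized: `f` is semilinear along the constant-coefficient map
`Λ →+* ℤ_p`). If `Y/νY` is finite of cardinality `p^s`, then `ker f = 0`; in particular
`f : Y → ℤ_p^s` is an isomorphism. -/
theorem ker_eq_bot_of_card_quotient_eq
    (p : ℕ) [Fact p.Prime] (n s : ℕ)
    (Y : Type*) [AddCommGroup Y] [Module (PowerSeries (PadicInt p)) Y]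
    [Module.Finite (PowerSeries (PadicInt p)) Y]
    (f : Y →ₛₗ[(PowerSeries.constantCoeff (R := PadicInt p))] (Fin s → PadicInt p))
    (hsurj : Function.Surjective f)
    (hfin : Finite (Y ⧸ (Ideal.span
      {∑ k ∈ Finset.range p, ((1 : PowerSeries (PadicInt p)) + PowerSeries.X) ^ (k * p ^ n)} •
        (⊤ : Submodule (PowerSeries (PadicInt p)) Y))))
    (hcard : Nat.card (Y ⧸ (Ideal.span
      {∑ k ∈ Finset.range p, ((1 : PowerSeries (PadicInt p)) + PowerSeries.X) ^ (k * p ^ n)} •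
        (⊤ : Submodule (PowerSeries (PadicInt p)) Y))) = p ^ s) :
    LinearMap.ker f = ⊥ ∧ Function.Bijective f := by
  classical
  have hp : p.Prime := Fact.out
  haveI : NeZero p := ⟨hp.ne_zero⟩
  set ν : PowerSeries (PadicInt p) :=
    ∑ k ∈ Finset.range p, ((1 : PowerSeries (PadicInt p)) + PowerSeries.X) ^ (k * p ^ n) with hν
  set N : Submodule (PowerSeries (PadicInt p)) Y := Ideal.span {ν} • ⊤ with hN
  -- the constant coefficient of ν is p
  have hcc : constantCoeff (R := PadicInt p) ν = (p : PadicInt p) := by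
    rw [hν, map_sum]
    simp [map_pow]
  -- the composite ring hom Λ → ℤ_p → ZMod p
  set ρ : PowerSeries (PadicInt p) →+* ZMod p :=
    (PadicInt.toZMod).comp (constantCoeff (R := PadicInt p)) with hρ
  have hρν : ρ ν = 0 := by
    rw [hρ, RingHom.comp_apply, hcc]
    simp
  -- the composite semilinear map g : Y → (ZMod p)^s
  let g : Y →ₛₗ[ρ] (Fin s → ZMod p) :=
    { toFun := fun y i => PadicInt.toZMod (f y i)
      map_add' := fun a b => by funext i; simp
      map_smul' := fun c y => by
        funext i
        simp [f.map_smulₛₗ, hρ] }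
  have hg_apply : ∀ y i, g y i = PadicInt.toZMod (f y i) := fun y i => rfl
  have hNg : N ≤ LinearMap.ker g := by
    rw [hN, Submodule.smul_le]
    intro r hr m _
    obtain ⟨a, rfl⟩ := Ideal.mem_span_singleton'.mp hr
    have h1 : g ((a * ν) • m) = ρ (a * ν) • g m := g.map_smulₛₗ _ _
    rw [LinearMap.mem_ker, h1, map_mul, hρν, mul_zero, zero_smul]
  let ψ := N.liftQ g hNg
  have htz : Function.Surjective (PadicInt.toZMod (p := p)) := fun z => by
    obtain ⟨m, rfl⟩ := ZMod.natCast_zmod_surjective z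
    exact ⟨(m : PadicInt p), by simp⟩
  have hgs : Function.Surjective g := by
    intro v
    choose w hw using fun i => htz (v i)
    obtain ⟨y, hy⟩ := hsurj w
    refine ⟨y, funext fun i => ?_⟩
    rw [hg_apply, hy]
    exact hw i
  have hψs : Function.Surjective ψ := by
    intro v
    obtain ⟨y, hy⟩ := hgs v
    exact ⟨Submodule.Quotient.mk y, by rwa [Submodule.liftQ_apply]⟩
  haveI : Finite (Y ⧸ N) := hfin
  have hcards : Nat.card (Y ⧸ N) = Nat.card (Fin s → ZMod p) := by
    rw [hcard, Nat.card_fun, Nat.card_zmod, Nat.card_eq_fintype_card, Fintype.card_fin]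
  have hψbij : Function.Bijective ψ :=
    (Nat.bijective_iff_surjective_and_card ψ).mpr ⟨hψs, hcards⟩
  -- hence ker f ≤ N
  have hkerN : LinearMap.ker f ≤ N := by
    intro y hy
    have h0 : ψ (Submodule.Quotient.mk y) = 0 := by
      rw [Submodule.liftQ_apply]
      funext i
      rw [hg_apply]
      simp [LinearMap.mem_ker.mp hy]
    have h1 : (Submodule.Quotient.mk y : Y ⧸ N) = 0 :=
      hψbij.injective (by rw [h0, map_zero])
    exact (Submodule.Quotient.mk_eq_zero N).mp h1
  -- ker f ≤ ν • ker f
  have hKsub : LinearMap.ker f ≤ Ideal.span {ν} • (LinearMap.ker f) := by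
    intro k hk
    have hkN : k ∈ ν • (⊤ : Submodule (PowerSeries (PadicInt p)) Y) := by
      rw [← Submodule.ideal_span_singleton_smul]
      exact hkerN hk
    rw [← SetLike.mem_coe, Submodule.coe_pointwise_smul] at hkN
    obtain ⟨y, -, rfl⟩ := hkN
    have hy0 : y ∈ LinearMap.ker f := by
      rw [LinearMap.mem_ker] at hk ⊢
      rw [f.map_smulₛₗ, hcc] at hk
      funext i
      have h2 := congrFun hk i
      rw [Pi.smul_apply, smul_eq_mul, Pi.zero_apply] at h2
      have hpne : (p : PadicInt p) ≠ 0 := Nat.cast_ne_zero.mpr hp.ne_zero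
      have := (mul_eq_zero.mp h2).resolve_left hpne
      simpa using this
    rw [Submodule.ideal_span_singleton_smul]
    exact Submodule.smul_mem_pointwise_smul y ν _ hy0
  -- finite generation of ker f, via finite presentation of ℤ_p^s over Λ
  letI instP : Module (PowerSeries (PadicInt p)) (Fin s → PadicInt p) :=
    Module.compHom _ (constantCoeff (R := PadicInt p))
  let f' : Y →ₗ[PowerSeries (PadicInt p)] (Fin s → PadicInt p) :=
    { toFun := f
      map_add' := f.map_add'
      map_smul' := f.map_smul' }
  let π : (Fin s → PowerSeries (PadicInt p)) →ₗ[PowerSeries (PadicInt p)]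
      (Fin s → PadicInt p) :=
    { toFun := fun v i => constantCoeff (R := PadicInt p) (v i)
      map_add' := fun a b => by funext i; simp
      map_smul' := fun c v => by
        funext i
        show constantCoeff (R := PadicInt p) (c * v i)
          = (constantCoeff (R := PadicInt p) c • fun i => constantCoeff (R := PadicInt p) (v i)) i
        rw [Pi.smul_apply, smul_eq_mul, map_mul] }
  have hπs : Function.Surjective π := fun v =>
    ⟨fun i => PowerSeries.C (R := PadicInt p) (v i), funext fun i => by simp [π]⟩
  have hπker : (LinearMap.ker π).FG := by
    have hkereq : LinearMap.ker π = Submodule.pi Set.univ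
        (fun _ : Fin s => (Ideal.span {PowerSeries.X} : Ideal (PowerSeries (PadicInt p)))) := by
      ext v
      simp only [LinearMap.mem_ker, Submodule.mem_pi, Set.mem_univ, forall_true_left,
        Ideal.mem_span_singleton, PowerSeries.X_dvd_iff, funext_iff]
      constructor
      · intro h i; exact h i
      · intro h i; exact h i
    rw [hkereq]
    exact Submodule.fg_pi fun i => ⟨{PowerSeries.X}, by simp⟩
  haveI : Module.FinitePresentation (PowerSeries (PadicInt p)) (Fin s → PadicInt p) :=
    Module.finitePresentation_of_surjective π hπs hπker
  have hsurj' : Function.Surjective f' := hsurj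
  have hfg : (LinearMap.ker f').FG := Module.FinitePresentation.fg_ker f' hsurj'
  have hkk : LinearMap.ker f = LinearMap.ker f' := rfl
  -- Nakayama
  have hjac : Ideal.span {ν} ≤ (⊥ : Ideal (PowerSeries (PadicInt p))).jacobson := by
    rw [IsLocalRing.jacobson_eq_maximalIdeal ⊥ bot_ne_top, Ideal.span_le,
      Set.singleton_subset_iff, SetLike.mem_coe, IsLocalRing.mem_maximalIdeal]
    intro hu
    have h3 := (PowerSeries.isUnit_iff_constantCoeff).mp hu
    rw [hcc] at h3
    exact PadicInt.p_nonunit h3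
  have hker0 : LinearMap.ker f = ⊥ := by
    rw [hkk] at hKsub ⊢
    exact Submodule.eq_bot_of_le_smul_of_le_jacobson_bot (Ideal.span {ν}) _ hfg hKsub hjac
  refine ⟨hker0, ⟨?_, hsurj⟩⟩
  intro a b hab
  have hmem : a - b ∈ LinearMap.ker f := by
    rw [LinearMap.mem_ker, map_sub, hab, sub_self]
  rw [hker0, Submodule.mem_bot] at hmem
  exact sub_eq_zero.mp hmem
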